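/- Let λ_1, λ_2 ∈ ℝ_{≥0} and set Λ_1 = λ_1 + λ_2, Λ_2 = λ_2. Define O ⊆ ℝ³ as the set of (a,b,c) with 0 ≤ a ≤ b ≤ c ≤ Λ_1 and a ≤ Λ_2 ≤ c, and define F ⊆ ℝ_{≥0}³ as the set of (x,y,z) with x ≤ Λ_2, z ≤ Λ_1 − Λ_2, and x + y + z ≤ Λ_1. Then the map φ(a,b,c) = (a, b−a, min{c−b, c−Λ_2}) is a bijection from O onto F. -/
import Mathlib


/-- The Ardila--Bliem--Salazar transfer map `(a,b,c) ↦ (a, b-a, min (c-b) (c-Λ₂))` is a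
bijection from the Gelfand--Tsetlin polytope of type `A₂` onto the FFLV polytope. -/
theorem stmt7 (lam1 lam2 : ℝ) (h1 : 0 ≤ lam1) (h2 : 0 ≤ lam2) :
    Set.BijOn (fun p : ℝ × ℝ × ℝ => (p.1, p.2.1 - p.1, min (p.2.2 - p.2.1) (p.2.2 - lam2)))
      {p : ℝ × ℝ × ℝ | 0 ≤ p.1 ∧ p.1 ≤ p.2.1 ∧ p.2.1 ≤ p.2.2 ∧ p.2.2 ≤ lam1 + lam2 ∧
        p.1 ≤ lam2 ∧ lam2 ≤ p.2.2}
      {p : ℝ × ℝ × ℝ | 0 ≤ p.1 ∧ 0 ≤ p.2.1 ∧ 0 ≤ p.2.2 ∧ p.1 ≤ lam2 ∧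
        p.2.2 ≤ (lam1 + lam2) - lam2 ∧ p.1 + p.2.1 + p.2.2 ≤ lam1 + lam2} := by
  have hinv : Set.InvOn
      (fun p : ℝ × ℝ × ℝ => (p.1, p.1 + p.2.1, p.2.2 + max (p.1 + p.2.1) lam2))
      (fun p : ℝ × ℝ × ℝ => (p.1, p.2.1 - p.1, min (p.2.2 - p.2.1) (p.2.2 - lam2)))
      {p : ℝ × ℝ × ℝ | 0 ≤ p.1 ∧ p.1 ≤ p.2.1 ∧ p.2.1 ≤ p.2.2 ∧ p.2.2 ≤ lam1 + lam2 ∧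
        p.1 ≤ lam2 ∧ lam2 ≤ p.2.2}
      {p : ℝ × ℝ × ℝ | 0 ≤ p.1 ∧ 0 ≤ p.2.1 ∧ 0 ≤ p.2.2 ∧ p.1 ≤ lam2 ∧
        p.2.2 ≤ (lam1 + lam2) - lam2 ∧ p.1 + p.2.1 + p.2.2 ≤ lam1 + lam2} := by
    constructor
    · rintro ⟨a, b, c⟩ ⟨ha, hab, hbc, hc, halam, hlamc⟩
      simp only [Prod.mk.injEq]
      refine ⟨by trivial, by ring, ?_⟩
      rcases le_total b lam2 with h | h
      · rw [min_eq_right (by linarith), max_eq_right (by linarith)]; ring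
      · rw [min_eq_left (by linarith), max_eq_left (by linarith)]; ring
    · rintro ⟨x, y, z⟩ ⟨hx, hy, hz, hxlam, hzlam, hsum⟩
      simp only [Prod.mk.injEq]
      refine ⟨by trivial, by ring, ?_⟩
      rcases le_total (x + y) lam2 with h | h
      · rw [max_eq_right h, min_eq_right (by linarith)]; ring
      · rw [max_eq_left h, min_eq_left (by linarith)]; ring
  refine hinv.bijOn ?_ ?_
  · rintro ⟨a, b, c⟩ ⟨ha, hab, hbc, hc, halam, hlamc⟩
    simp only [Set.mem_setOf_eq] at *
    refine ⟨ha, by simpa using hab, le_min (by linarith) (by linarith),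
      halam, min_le_of_right_le (by linarith), ?_⟩
    have := min_le_left (c - b) (c - lam2)
    linarith
  · rintro ⟨x, y, z⟩ ⟨hx, hy, hz, hxlam, hzlam, hsum⟩
    simp only [Set.mem_setOf_eq] at *
    refine ⟨hx, by linarith, le_add_of_nonneg_of_le hz (le_max_left _ _), ?_,
      hxlam, le_add_of_nonneg_of_le hz (le_max_right _ _)⟩
    rcases le_total (x + y) lam2 with h | h
    · rw [max_eq_right h]; linarith
    · rw [max_eq_left h]; linarith
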